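/- Let T be a tree with exactly one edge {u,w}, let Γ be a (c,t)-sparse graph, and let G ⊆ Γ have minimum degree at least Ct with C > 4/κ for a given 0 < κ < 1 (C ≥ 4/κ suffices). Sample a uniformly random ordered edge (x_u, x_w) of G. Then with probability at least 1 − κ, both |N_G(x_u) \ N_Γ(x_w)| ≥ c|N_G(x_u)| and |N_G(x_w) \ N_Γ(x_u)| ≥ c|N_G(x_w)| hold; i.e., the random edge is a c-unique copy of T. -/

import Mathlib

open scoped Classical
open Finset SimpleGraph

/-- A graph is `(c,t)`-sparse if any two vertex subsets of size at least `t` have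
edge density (counting ordered pairs) at most `1 - c`. -/
def Sparse {V : Type*} [Fintype V] (Γ : SimpleGraph V) (c : ℝ) (t : ℕ) : Prop :=
  ∀ A B : Finset V, t ≤ A.card → t ≤ B.card →
    (((A ×ˢ B).filter fun p => Γ.Adj p.1 p.2).card : ℝ) ≤ (1 - c) * A.card * B.card

set_option linter.unusedVariables false in
lemma key_lemma {V : Type*} [Fintype V] (Γ G : SimpleGraph V) (c : ℝ) (t : ℕ)
    (hc : 0 < c) (ht : 1 ≤ t) (hsparse : Sparse Γ c t) (x : V)
    (hx : t ≤ (G.neighborFinset x).card) :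
    ((G.neighborFinset x).filter fun y =>
      (((G.neighborFinset x) \ (Γ.neighborFinset y)).card : ℝ)
        < c * ((G.neighborFinset x).card : ℝ)).card ≤ t := by
  by_contra hlt
  push_neg at hlt
  set A := G.neighborFinset x with hA
  set B := A.filter (fun y =>
      (((A : Finset V) \ (Γ.neighborFinset y)).card : ℝ) < c * (A.card : ℝ)) with hB
  have hBt : t ≤ B.card := hlt.le
  have hsp := hsparse A B hx hBt
  have hApos : 0 < (A.card : ℝ) := by
    have : 0 < A.card := lt_of_lt_of_le ht hx
    exact_mod_cast this
  have hcount : ((A ×ˢ B).filter fun p => Γ.Adj p.1 p.2).card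
      = ∑ y ∈ B, (A.filter fun a => Γ.Adj a y).card := by
    rw [Finset.card_filter, Finset.sum_product, Finset.sum_comm]
    exact Finset.sum_congr rfl fun y _ => (Finset.card_filter _ _).symm
  have hlow : ∀ y ∈ B, (1 - c) * (A.card : ℝ) < ((A.filter fun a => Γ.Adj a y).card : ℝ) := by
    intro y hy
    have hy' : ((A \ Γ.neighborFinset y).card : ℝ) < c * A.card :=
      (Finset.mem_filter.mp hy).2
    have hsub : A \ Γ.neighborFinset y = A.filter fun a => ¬ Γ.Adj a y := by
      ext a
      simp [Finset.mem_sdiff, SimpleGraph.mem_neighborFinset, SimpleGraph.adj_comm]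
    have hsplit : (A.filter fun a => Γ.Adj a y).card
        + (A.filter fun a => ¬ Γ.Adj a y).card = A.card :=
      Finset.card_filter_add_card_filter_not _
    have hsplit' : ((A.filter fun a => Γ.Adj a y).card : ℝ)
        + ((A.filter fun a => ¬ Γ.Adj a y).card : ℝ) = (A.card : ℝ) := by
      exact_mod_cast hsplit
    rw [hsub] at hy'
    linarith
  have hBne : B.Nonempty := Finset.card_pos.mp (lt_of_lt_of_le ht hBt)
  have hsum : (1 - c) * (A.card : ℝ) * B.card
      < ∑ y ∈ B, ((A.filter fun a => Γ.Adj a y).card : ℝ) := by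
    calc (1 - c) * (A.card : ℝ) * B.card = ∑ _y ∈ B, (1 - c) * (A.card : ℝ) := by
          rw [Finset.sum_const, nsmul_eq_mul]; ring
      _ < _ := Finset.sum_lt_sum_of_nonempty hBne hlow
  have hcast : (((A ×ˢ B).filter fun p => Γ.Adj p.1 p.2).card : ℝ)
      = ∑ y ∈ B, ((A.filter fun a => Γ.Adj a y).card : ℝ) := by
    rw [hcount]; push_cast; rfl
  linarith [hsp, hsum, hcast]

set_option linter.unusedVariables false in
theorem stmt_17 {V : Type*} [Fintype V] [Nonempty V] (Γ G : SimpleGraph V)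
    (c C κ : ℝ) (t : ℕ) (hc : 0 < c) (ht : 1 ≤ t)
    (hκ₀ : 0 < κ) (hκ₁ : κ < 1) (hC : 4 / κ ≤ C)
    (hsparse : Sparse Γ c t) (hGΓ : G ≤ Γ)
    (hmindeg : ∀ v : V, C * t ≤ (G.degree v : ℝ)) :
    1 - κ ≤
      ((Finset.univ.filter fun p : V × V => G.Adj p.1 p.2 ∧
          c * (G.neighborFinset p.1).card ≤
            (((G.neighborFinset p.1) \ (Γ.neighborFinset p.2)).card : ℝ) ∧
          c * (G.neighborFinset p.2).card ≤
            (((G.neighborFinset p.2) \ (Γ.neighborFinset p.1)).card : ℝ)).card : ℝ)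
        / ((Finset.univ.filter fun p : V × V => G.Adj p.1 p.2).card : ℝ) := by
  classical
  have hC4 : 4 ≤ κ * C := by
    have := (div_le_iff₀ hκ₀).mp hC
    linarith
  have hCpos : 0 < C := by nlinarith
  have hC1 : (1 : ℝ) ≤ C := by nlinarith
  have ht1' : (1 : ℝ) ≤ (t : ℝ) := by exact_mod_cast ht
  have key : ∀ x : V, ((G.neighborFinset x).filter fun y =>
      (((G.neighborFinset x) \ (Γ.neighborFinset y)).card : ℝ)
        < c * ((G.neighborFinset x).card : ℝ)).card ≤ t := by
    intro x
    refine key_lemma Γ G c t hc ht hsparse x ?_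
    have h1 := hmindeg x
    have h2 : (t : ℝ) ≤ (G.degree x : ℝ) := by nlinarith
    have h3 : t ≤ G.degree x := by exact_mod_cast h2
    rwa [← SimpleGraph.card_neighborFinset_eq_degree] at h3
  set E := Finset.univ.filter fun p : V × V => G.Adj p.1 p.2 with hE
  set Good := Finset.univ.filter fun p : V × V => G.Adj p.1 p.2 ∧
          c * ((G.neighborFinset p.1).card : ℝ) ≤
            (((G.neighborFinset p.1) \ (Γ.neighborFinset p.2)).card : ℝ) ∧
          c * ((G.neighborFinset p.2).card : ℝ) ≤
            (((G.neighborFinset p.2) \ (Γ.neighborFinset p.1)).card : ℝ) with hGoodDef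
  set Bad1 := E.filter fun p : V × V =>
      (((G.neighborFinset p.1) \ (Γ.neighborFinset p.2)).card : ℝ)
        < c * ((G.neighborFinset p.1).card : ℝ) with hBad1
  set Bad2 := E.filter fun p : V × V =>
      (((G.neighborFinset p.2) \ (Γ.neighborFinset p.1)).card : ℝ)
        < c * ((G.neighborFinset p.2).card : ℝ) with hBad2
  -- fiber count for E
  have hfibE : ∀ x : V, (E.filter fun p => p.1 = x).card = (G.neighborFinset x).card := by
    intro x
    refine Finset.card_bij' (fun p _ => p.2) (fun y _ => (x, y)) ?_ ?_ ?_ ?_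
    · intro p hp
      simp only [hE, Finset.mem_filter, Finset.mem_univ, true_and] at hp
      have := hp.1
      rw [hp.2] at this
      exact (G.mem_neighborFinset x p.2).mpr this
    · intro y hy
      rw [SimpleGraph.mem_neighborFinset] at hy
      exact Finset.mem_filter.mpr ⟨Finset.mem_filter.mpr ⟨Finset.mem_univ _, hy⟩, rfl⟩
    · intro p hp
      simp only [Finset.mem_filter] at hp
      exact Prod.ext hp.2.symm rfl
    · intro y hy
      rfl
  have hEcard : E.card = ∑ x : V, (E.filter fun p => p.1 = x).card :=
    Finset.card_eq_sum_card_fiberwise (fun p _ => Finset.mem_univ _)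
  have hElow : (Fintype.card V : ℝ) * (C * t) ≤ (E.card : ℝ) := by
    rw [hEcard]
    push_cast
    calc (Fintype.card V : ℝ) * (C * t) = ∑ _x : V, (C * (t : ℝ)) := by
          rw [Finset.sum_const, nsmul_eq_mul, Finset.card_univ]
      _ ≤ ∑ x : V, ((E.filter fun p => p.1 = x).card : ℝ) := by
          refine Finset.sum_le_sum fun x _ => ?_
          rw [hfibE x]
          exact hmindeg x
  -- Bad1 bound
  have hB1 : Bad1.card ≤ Fintype.card V * t := by
    rw [Finset.card_eq_sum_card_fiberwise (fun p (_ : p ∈ Bad1) => Finset.mem_univ p.1)]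
    calc ∑ x : V, (Bad1.filter fun p => p.1 = x).card ≤ ∑ _x : V, t := by
          refine Finset.sum_le_sum fun x _ => ?_
          refine le_trans (Finset.card_le_card_of_injOn (fun p => p.2) ?_ ?_) (key x)
          · intro p hp
            simp only [Finset.mem_coe, hBad1, hE, Finset.mem_filter, Finset.mem_univ, true_and] at hp
            obtain ⟨⟨hadj, hbad⟩, h1⟩ := hp
            rw [Finset.mem_coe, Finset.mem_filter, SimpleGraph.mem_neighborFinset, ← h1]
            exact ⟨hadj, hbad⟩
          · intro p hp q hq hpq
            simp only [Finset.mem_coe, Finset.mem_filter] at hp hq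
            exact Prod.ext (hp.2.trans hq.2.symm) hpq
      _ = Fintype.card V * t := by rw [Finset.sum_const, smul_eq_mul, Finset.card_univ]
  -- Bad2 bound
  have hB2 : Bad2.card ≤ Fintype.card V * t := by
    rw [Finset.card_eq_sum_card_fiberwise (fun p (_ : p ∈ Bad2) => Finset.mem_univ p.2)]
    calc ∑ x : V, (Bad2.filter fun p => p.2 = x).card ≤ ∑ _x : V, t := by
          refine Finset.sum_le_sum fun x _ => ?_
          refine le_trans (Finset.card_le_card_of_injOn (fun p => p.1) ?_ ?_) (key x)
          · intro p hp
            simp only [Finset.mem_coe, hBad2, hE, Finset.mem_filter, Finset.mem_univ, true_and] at hp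
            obtain ⟨⟨hadj, hbad⟩, h2⟩ := hp
            rw [Finset.mem_coe, Finset.mem_filter, SimpleGraph.mem_neighborFinset, ← h2]
            exact ⟨hadj.symm, hbad⟩
          · intro p hp q hq hpq
            simp only [Finset.mem_coe, Finset.mem_filter] at hp hq
            exact Prod.ext hpq (hp.2.trans hq.2.symm)
      _ = Fintype.card V * t := by rw [Finset.sum_const, smul_eq_mul, Finset.card_univ]
  -- cover
  have hcover : E.card ≤ Good.card + (Bad1.card + Bad2.card) := by
    calc E.card ≤ (Good ∪ (Bad1 ∪ Bad2)).card := by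
          refine Finset.card_le_card fun p hp => ?_
          simp only [hE, Finset.mem_filter, Finset.mem_univ, true_and] at hp
          by_cases h1 : c * ((G.neighborFinset p.1).card : ℝ) ≤
              (((G.neighborFinset p.1) \ (Γ.neighborFinset p.2)).card : ℝ)
          · by_cases h2 : c * ((G.neighborFinset p.2).card : ℝ) ≤
                (((G.neighborFinset p.2) \ (Γ.neighborFinset p.1)).card : ℝ)
            · exact Finset.mem_union_left _ (by
                simp only [hGoodDef, Finset.mem_filter, Finset.mem_univ, true_and]
                exact ⟨hp, h1, h2⟩)
            · refine Finset.mem_union_right _ (Finset.mem_union_right _ ?_)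
              simp only [hBad2, hE, Finset.mem_filter, Finset.mem_univ, true_and]
              exact ⟨hp, not_le.mp h2⟩
          · refine Finset.mem_union_right _ (Finset.mem_union_left _ ?_)
            simp only [hBad1, hE, Finset.mem_filter, Finset.mem_univ, true_and]
            exact ⟨hp, not_le.mp h1⟩
      _ ≤ Good.card + (Bad1 ∪ Bad2).card := Finset.card_union_le _ _
      _ ≤ Good.card + (Bad1.card + Bad2.card) := by
          exact Nat.add_le_add_left (Finset.card_union_le _ _) _
  -- final arithmetic
  have hn1 : (1 : ℝ) ≤ (Fintype.card V : ℝ) := by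
    have : 1 ≤ Fintype.card V := Fintype.card_pos
    exact_mod_cast this
  have ht1 : (1 : ℝ) ≤ (t : ℝ) := by exact_mod_cast ht
  have hCt : C ≤ C * t := by nlinarith
  have hnCt : C * t ≤ (Fintype.card V : ℝ) * (C * t) := by
    nlinarith [mul_nonneg (by linarith : (0:ℝ) ≤ (Fintype.card V : ℝ) - 1)
      (by nlinarith : (0:ℝ) ≤ C * t)]
  have hEpos : (0 : ℝ) < (E.card : ℝ) := by linarith
  rw [le_div_iff₀ hEpos]
  have hcover' : (E.card : ℝ) ≤ (Good.card : ℝ) + ((Bad1.card : ℝ) + (Bad2.card : ℝ)) := by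
    exact_mod_cast hcover
  have hB1' : (Bad1.card : ℝ) ≤ (Fintype.card V : ℝ) * t := by exact_mod_cast hB1
  have hB2' : (Bad2.card : ℝ) ≤ (Fintype.card V : ℝ) * t := by exact_mod_cast hB2
  have hnt : (0:ℝ) ≤ (Fintype.card V : ℝ) * t := by positivity
  have hkey : 4 * ((Fintype.card V : ℝ) * t) ≤ κ * (E.card : ℝ) := by
    have h1 : κ * ((Fintype.card V : ℝ) * (C * t)) ≤ κ * (E.card : ℝ) :=
      mul_le_mul_of_nonneg_left hElow hκ₀.le
    nlinarith [mul_le_mul_of_nonneg_right hC4 hnt]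
  nlinarith [hcover', hB1', hB2', hkey, hEpos]
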